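/- Let a_0, ..., a_9, b_0, ..., b_9, A_0, ..., A_9, B_0, ..., B_9 be real numbers and set F^+(x,y) = a_0 + a_1 x + a_2 y + a_3 x^2 + a_4 xy + a_5 y^2 + a_6 x^3 + a_7 x^2 y + a_8 x y^2 + a_9 y^3, G^+(x,y) = b_0 + b_1 x + b_2 y + b_3 x^2 + b_4 xy + b_5 y^2 + b_6 x^3 + b_7 x^2 y + b_8 x y^2 + b_9 y^3, and F^-, G^- the same expressions with A_i, B_i in place of a_i, b_i. Then for every r > 0: -∫_0^π [cos θ · F^+(r cos θ, r sin θ) + sin θ · G^+(r cos θ, r sin θ)] dθ - ∫_{-π}^0 [cos θ · F^-(r cos θ, r sin θ) + sin θ · G^-(r cos θ, r sin θ)] dθ = η_3 r^3 + η_2 r^2 + η_1 r + η_0, where η_3 = (π/8)(-3a_6 - a_8 - b_7 - 3b_9 - 3A_6 - A_8 - B_7 - 3B_9), η_2 = (2/3)(-a_4 - b_3 - 2b_5 + A_4 + B_3 + 2B_5), η_1 = (π/2)(-a_1 - b_2 - A_1 - B_2), η_0 = 2(B_0 - b_0). -/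

import Mathlib

open Real intervalIntegral

/-- The general cubic polynomial in two variables with coefficient tuple `c`. -/
noncomputable def cubicPoly (c : ℕ → ℝ) (x y : ℝ) : ℝ :=
  c 0 + c 1 * x + c 2 * y + c 3 * x ^ 2 + c 4 * x * y + c 5 * y ^ 2
    + c 6 * x ^ 3 + c 7 * x ^ 2 * y + c 8 * x * y ^ 2 + c 9 * y ^ 3

/-- Explicit antiderivative of `cos θ * F(r cos θ, r sin θ) + sin θ * G(r cos θ, r sin θ)`. -/
noncomputable def Haux (u v : ℕ → ℝ) (r t : ℝ) : ℝ :=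
  u 0 * Real.sin t
  + u 1 * r * (t / 2 + Real.sin t * Real.cos t / 2)
  + u 2 * r * (Real.sin t ^ 2 / 2)
  + u 3 * r ^ 2 * (Real.sin t - Real.sin t ^ 3 / 3)
  + u 4 * r ^ 2 * (-(Real.cos t ^ 3) / 3)
  + u 5 * r ^ 2 * (Real.sin t ^ 3 / 3)
  + u 6 * r ^ 3 * (3 * t / 8 + 3 * (Real.sin t * Real.cos t) / 8 + Real.sin t * Real.cos t ^ 3 / 4)
  + u 7 * r ^ 3 * (-(Real.cos t ^ 4) / 4)
  + u 8 * r ^ 3 * (t / 8 + Real.sin t * Real.cos t / 8 - Real.sin t * Real.cos t ^ 3 / 4)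
  + u 9 * r ^ 3 * (Real.sin t ^ 4 / 4)
  + v 0 * (-Real.cos t)
  + v 1 * r * (Real.sin t ^ 2 / 2)
  + v 2 * r * (t / 2 - Real.sin t * Real.cos t / 2)
  + v 3 * r ^ 2 * (-(Real.cos t ^ 3) / 3)
  + v 4 * r ^ 2 * (Real.sin t ^ 3 / 3)
  + v 5 * r ^ 2 * (-Real.cos t + Real.cos t ^ 3 / 3)
  + v 6 * r ^ 3 * (-(Real.cos t ^ 4) / 4)
  + v 7 * r ^ 3 * (t / 8 + Real.sin t * Real.cos t / 8 - Real.sin t * Real.cos t ^ 3 / 4)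
  + v 8 * r ^ 3 * (Real.sin t ^ 4 / 4)
  + v 9 * r ^ 3 * (3 * t / 8 - 3 * (Real.sin t * Real.cos t) / 8 - Real.cos t * Real.sin t ^ 3 / 4)

section monomials

variable (t : ℝ)

lemma hM_c : HasDerivAt (fun t => Real.sin t) (Real.cos t) t := Real.hasDerivAt_sin t

lemma hM_s : HasDerivAt (fun t => -Real.cos t) (Real.sin t) t := by
  have h := (Real.hasDerivAt_cos t).neg
  refine h.congr_deriv (Eq.symm ?_); ring

lemma hM_c2 : HasDerivAt (fun t => t / 2 + Real.sin t * Real.cos t / 2) (Real.cos t ^ 2) t := by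
  have h := ((hasDerivAt_id' (x := t)).div_const 2).add
    (((Real.hasDerivAt_sin t).mul (Real.hasDerivAt_cos t)).div_const 2)
  refine h.congr_deriv (Eq.symm ?_)
  linear_combination (Real.sin_sq_add_cos_sq t) / 2

lemma hM_s2 : HasDerivAt (fun t => t / 2 - Real.sin t * Real.cos t / 2) (Real.sin t ^ 2) t := by
  have h := ((hasDerivAt_id' (x := t)).div_const 2).sub
    (((Real.hasDerivAt_sin t).mul (Real.hasDerivAt_cos t)).div_const 2)
  refine h.congr_deriv (Eq.symm ?_)
  linear_combination (Real.sin_sq_add_cos_sq t) / 2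

lemma hM_cs : HasDerivAt (fun t => Real.sin t ^ 2 / 2) (Real.cos t * Real.sin t) t := by
  have h := ((Real.hasDerivAt_sin t).pow 2).div_const 2
  refine h.congr_deriv (Eq.symm ?_); ring

lemma hM_c3 : HasDerivAt (fun t => Real.sin t - Real.sin t ^ 3 / 3) (Real.cos t ^ 3) t := by
  have h := (Real.hasDerivAt_sin t).sub (((Real.hasDerivAt_sin t).pow 3).div_const 3)
  refine h.congr_deriv (Eq.symm ?_)
  linear_combination (Real.cos t) * (Real.sin_sq_add_cos_sq t)

lemma hM_s3 : HasDerivAt (fun t => -Real.cos t + Real.cos t ^ 3 / 3) (Real.sin t ^ 3) t := by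
  have h := ((Real.hasDerivAt_cos t).neg).add (((Real.hasDerivAt_cos t).pow 3).div_const 3)
  refine h.congr_deriv (Eq.symm ?_)
  linear_combination (Real.sin t) * (Real.sin_sq_add_cos_sq t)

lemma hM_c2s : HasDerivAt (fun t => -(Real.cos t ^ 3) / 3) (Real.cos t ^ 2 * Real.sin t) t := by
  have h := (((Real.hasDerivAt_cos t).pow 3).neg).div_const 3
  refine h.congr_deriv (Eq.symm ?_); ring

lemma hM_cs2 : HasDerivAt (fun t => Real.sin t ^ 3 / 3) (Real.cos t * Real.sin t ^ 2) t := by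
  have h := ((Real.hasDerivAt_sin t).pow 3).div_const 3
  refine h.congr_deriv (Eq.symm ?_); ring

lemma hM_c4 : HasDerivAt
    (fun t => 3 * t / 8 + 3 * (Real.sin t * Real.cos t) / 8 + Real.sin t * Real.cos t ^ 3 / 4)
    (Real.cos t ^ 4) t := by
  have h := ((((hasDerivAt_id' (x := t)).const_mul 3).div_const 8).add
      ((((Real.hasDerivAt_sin t).mul (Real.hasDerivAt_cos t)).const_mul 3).div_const 8)).add
    (((Real.hasDerivAt_sin t).mul ((Real.hasDerivAt_cos t).pow 3)).div_const 4)
  refine h.congr_deriv (Eq.symm ?_)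
  simp only [Pi.pow_apply]
  linear_combination (3 / 8 + 3 / 4 * Real.cos t ^ 2) * (Real.sin_sq_add_cos_sq t)

lemma hM_s4 : HasDerivAt
    (fun t => 3 * t / 8 - 3 * (Real.sin t * Real.cos t) / 8 - Real.cos t * Real.sin t ^ 3 / 4)
    (Real.sin t ^ 4) t := by
  have h := ((((hasDerivAt_id' (x := t)).const_mul 3).div_const 8).sub
      ((((Real.hasDerivAt_sin t).mul (Real.hasDerivAt_cos t)).const_mul 3).div_const 8)).sub
    (((Real.hasDerivAt_cos t).mul ((Real.hasDerivAt_sin t).pow 3)).div_const 4)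
  refine h.congr_deriv (Eq.symm ?_)
  simp only [Pi.pow_apply]
  linear_combination (3 / 8 + 3 / 4 * Real.sin t ^ 2) * (Real.sin_sq_add_cos_sq t)

lemma hM_c3s : HasDerivAt (fun t => -(Real.cos t ^ 4) / 4) (Real.cos t ^ 3 * Real.sin t) t := by
  have h := (((Real.hasDerivAt_cos t).pow 4).neg).div_const 4
  refine h.congr_deriv (Eq.symm ?_); ring

lemma hM_cs3 : HasDerivAt (fun t => Real.sin t ^ 4 / 4) (Real.cos t * Real.sin t ^ 3) t := by
  have h := ((Real.hasDerivAt_sin t).pow 4).div_const 4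
  refine h.congr_deriv (Eq.symm ?_); ring

lemma hM_c2s2 : HasDerivAt
    (fun t => t / 8 + Real.sin t * Real.cos t / 8 - Real.sin t * Real.cos t ^ 3 / 4)
    (Real.cos t ^ 2 * Real.sin t ^ 2) t := by
  have h := (((hasDerivAt_id' (x := t)).div_const 8).add
      (((Real.hasDerivAt_sin t).mul (Real.hasDerivAt_cos t)).div_const 8)).sub
    (((Real.hasDerivAt_sin t).mul ((Real.hasDerivAt_cos t).pow 3)).div_const 4)
  refine h.congr_deriv (Eq.symm ?_)
  simp only [Pi.pow_apply]
  linear_combination (1 / 8 + Real.cos t ^ 2 / 4) * (Real.sin_sq_add_cos_sq t)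

end monomials

lemma hasDerivAt_Haux (u v : ℕ → ℝ) (r t : ℝ) :
    HasDerivAt (Haux u v r)
      (Real.cos t * cubicPoly u (r * Real.cos t) (r * Real.sin t)
        + Real.sin t * cubicPoly v (r * Real.cos t) (r * Real.sin t)) t := by
  have h :=
    ((((((((((((((((((((hM_c t).const_mul (u 0)).add
      ((hM_c2 t).const_mul (u 1 * r))).add
      ((hM_cs t).const_mul (u 2 * r))).add
      ((hM_c3 t).const_mul (u 3 * r ^ 2))).add
      ((hM_c2s t).const_mul (u 4 * r ^ 2))).add
      ((hM_cs2 t).const_mul (u 5 * r ^ 2))).add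
      ((hM_c4 t).const_mul (u 6 * r ^ 3))).add
      ((hM_c3s t).const_mul (u 7 * r ^ 3))).add
      ((hM_c2s2 t).const_mul (u 8 * r ^ 3))).add
      ((hM_cs3 t).const_mul (u 9 * r ^ 3))).add
      ((hM_s t).const_mul (v 0))).add
      ((hM_cs t).const_mul (v 1 * r))).add
      ((hM_s2 t).const_mul (v 2 * r))).add
      ((hM_c2s t).const_mul (v 3 * r ^ 2))).add
      ((hM_cs2 t).const_mul (v 4 * r ^ 2))).add
      ((hM_s3 t).const_mul (v 5 * r ^ 2))).add
      ((hM_c3s t).const_mul (v 6 * r ^ 3))).add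
      ((hM_c2s2 t).const_mul (v 7 * r ^ 3))).add
      ((hM_cs3 t).const_mul (v 8 * r ^ 3))).add
      ((hM_s4 t).const_mul (v 9 * r ^ 3))
  have hfun : HasDerivAt (Haux u v r) _ t := h
  refine hfun.congr_deriv (Eq.symm ?_)
  simp only [cubicPoly]
  ring

lemma key_integral (u v : ℕ → ℝ) (r α β : ℝ) :
    (∫ θ in α..β,
        Real.cos θ * cubicPoly u (r * Real.cos θ) (r * Real.sin θ)
          + Real.sin θ * cubicPoly v (r * Real.cos θ) (r * Real.sin θ))
      = Haux u v r β - Haux u v r α := by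
  apply intervalIntegral.integral_eq_sub_of_hasDerivAt
  · intro t _
    exact hasDerivAt_Haux u v r t
  · apply Continuous.intervalIntegrable
    unfold cubicPoly
    fun_prop

/-- First averaged function of the discontinuous piecewise cubic perturbation of
the linear center: explicit computation of
`f₁(r) = η₃ r³ + η₂ r² + η₁ r + η₀`. -/
theorem first_averaged_function_cubic
    (a b A B : ℕ → ℝ) :
    ∀ r : ℝ, 0 < r →
      -(∫ θ in (0:ℝ)..π,
          Real.cos θ * cubicPoly a (r * Real.cos θ) (r * Real.sin θ)
            + Real.sin θ * cubicPoly b (r * Real.cos θ) (r * Real.sin θ))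
        - (∫ θ in (-π)..(0:ℝ),
          Real.cos θ * cubicPoly A (r * Real.cos θ) (r * Real.sin θ)
            + Real.sin θ * cubicPoly B (r * Real.cos θ) (r * Real.sin θ))
      = (π / 8) * (-3 * a 6 - a 8 - b 7 - 3 * b 9 - 3 * A 6 - A 8 - B 7 - 3 * B 9) * r ^ 3
        + (2 / 3) * (-a 4 - b 3 - 2 * b 5 + A 4 + B 3 + 2 * B 5) * r ^ 2
        + (π / 2) * (-a 1 - b 2 - A 1 - B 2) * r
        + 2 * (B 0 - b 0) := by
  intro r _
  rw [key_integral, key_integral]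
  simp only [Haux, Real.sin_pi, Real.cos_pi, Real.sin_zero, Real.cos_zero, Real.sin_neg,
    Real.cos_neg, neg_zero]
  ring
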